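/- For each r ∈ {1,…,7}, the 3-dimensional subspace span(h^r·μ₃) of ℝ⁶ contains the vector ν₃ = (1,1,1,0,0,0)ᵀ, where h = [[P₃,P₄],[-P₄,P₃]] and μ₃ = [I₃; 0₃ₓ₃]. -/

import Mathlib

open Matrix

noncomputable def P3 : Matrix (Fin 3) (Fin 3) ℝ :=
  (1/4 : ℝ) • !![1, 0, 1; 1, 1, 0; 0, 1, 1]

noncomputable def P4 : Matrix (Fin 3) (Fin 3) ℝ :=
  (Real.sqrt 3 / 12) • !![1, 0, -1; -1, 1, 0; 0, -1, 1]

noncomputable def hMat : Matrix (Fin 3 ⊕ Fin 3) (Fin 3 ⊕ Fin 3) ℝ :=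
  Matrix.fromBlocks P3 P4 (-P4) P3

/-- μ₃ = [I₃; 0] ∈ ℝ^{6×3}. -/
noncomputable def mu3 : Matrix (Fin 3 ⊕ Fin 3) (Fin 3) ℝ := Matrix.fromRows 1 0

/-- ν₃ = (1,1,1,0,0,0) ∈ ℝ⁶. -/
def nu3 : Fin 3 ⊕ Fin 3 → ℝ := Sum.elim (fun _ => 1) (fun _ => 0)

lemma hMat_mulVec_nu3 : hMat.mulVec nu3 = (1/2 : ℝ) • nu3 := by
  funext i
  cases i with
  | inl i =>
    simp only [hMat, mulVec, dotProduct, Fintype.sum_sum_type, Fin.sum_univ_three, nu3,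
      P3, P4, Matrix.fromBlocks, Sum.elim_inl, Sum.elim_inr, Matrix.of_apply,
      Pi.smul_apply, smul_eq_mul]
    fin_cases i <;> simp [Matrix.smul_apply, Matrix.cons_val_two] <;> norm_num
  | inr i =>
    simp only [hMat, mulVec, dotProduct, Fintype.sum_sum_type, Fin.sum_univ_three, nu3,
      P3, P4, Matrix.fromBlocks, Sum.elim_inl, Sum.elim_inr, Matrix.of_apply,
      Pi.smul_apply, smul_eq_mul]
    fin_cases i <;> simp [Matrix.smul_apply, Matrix.neg_apply, Matrix.cons_val_two]

lemma hMat_pow_mulVec_nu3 (r : ℕ) : (hMat ^ r).mulVec nu3 = ((1/2 : ℝ) ^ r) • nu3 := by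
  induction r with
  | zero => simp
  | succ n ih =>
    rw [pow_succ, ← Matrix.mulVec_mulVec, hMat_mulVec_nu3, Matrix.mulVec_smul, ih,
      smul_smul, pow_succ]
    ring_nf

/-- For each `r ∈ {1,…,7}` the column span of `h^r · μ₃` contains ν₃. -/
theorem nu3_in_span (r : ℕ) (hr : 1 ≤ r ∧ r ≤ 7) :
    nu3 ∈ LinearMap.range (hMat ^ r * mu3).mulVecLin := by
  refine ⟨fun _ => (2:ℝ)^r, ?_⟩
  have hmu : mu3.mulVec (fun _ => (2:ℝ)^r) = ((2:ℝ)^r) • nu3 := by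
    funext i
    cases i with
    | inl i => simp [mu3, mulVec, dotProduct, Matrix.fromRows_apply_inl, nu3, Matrix.one_apply,
        Finset.sum_ite_eq, Fin.sum_univ_three]
    | inr i => simp [mu3, mulVec, dotProduct, Matrix.fromRows_apply_inr, nu3]
  rw [Matrix.mulVecLin_apply, ← Matrix.mulVec_mulVec, hmu, Matrix.mulVec_smul,
    hMat_pow_mulVec_nu3, smul_smul]
  rw [← mul_pow]
  norm_num
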